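/- The duration of any temporal (s,z)-path takes at most S·|δ⁻(z)| distinct values, where S is the number of distinct availability times of edges leaving s and |δ⁻(z)| the in-degree of z. -/

import Mathlib

/-- A weighted temporal edge: source, destination, availability time,
traversal time, and real cost. -/
structure TEdge (V : Type) where
  src : V
  dst : V
  time : ℕ
  lam : ℕ
  cost : ℝ

variable {V : Type}

/-- Temporal compatibility of consecutive edges. -/
def TEdge.Compat (e f : TEdge V) : Prop := e.dst = f.src ∧ e.time + e.lam ≤ f.time

/-- A temporal (s,z)-walk in the edge set `E`. -/
def IsWalk (E : Set (TEdge V)) (s z : V) (P : List (TEdge V)) : Prop :=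
  P ≠ [] ∧ (∀ e ∈ P, e ∈ E) ∧ P.Chain' TEdge.Compat ∧
  (∀ e, P.head? = some e → e.src = s) ∧ (∀ e, P.getLast? = some e → e.dst = z)

/-- The sequence of vertices visited by a walk. -/
def visitedVerts (P : List (TEdge V)) : List V :=
  (P.head?.elim [] fun e => [e.src]) ++ P.map TEdge.dst

/-- A temporal path: a simple temporal walk. -/
def IsPath (E : Set (TEdge V)) (s z : V) (P : List (TEdge V)) : Prop :=
  IsWalk E s z P ∧ (visitedVerts P).Nodup

/-- Cost of a walk. -/
noncomputable def wcost (P : List (TEdge V)) : ℝ := (P.map TEdge.cost).sum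

/-- Arrival time of a walk. -/
def warr (P : List (TEdge V)) : ℕ := P.getLast?.elim 0 fun e => e.time + e.lam

/-- Starting time of a walk. -/
def wstart (P : List (TEdge V)) : ℕ := P.head?.elim 0 fun e => e.time

/-- Duration of a walk. -/
def wdur (P : List (TEdge V)) : ℕ := warr P - wstart P

/-- `Q` dominates `P` w.r.t. cost and the temporal objective `f`. -/
def Dominates (f : List (TEdge V) → ℕ) (Q P : List (TEdge V)) : Prop :=
  (wcost Q < wcost P ∧ f Q ≤ f P) ∨ (wcost Q ≤ wcost P ∧ f Q < f P)

/-- `P` is efficient within the set `X` w.r.t. cost and objective `f`. -/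
def EfficientIn (X : Set (List (TEdge V))) (f : List (TEdge V) → ℕ) (P : List (TEdge V)) : Prop :=
  P ∈ X ∧ ∀ Q ∈ X, ¬ Dominates f Q P

/-- the duration of (s,z)-paths takes at most S·|δ⁻(z)| distinct
values, where S is the number of distinct availability times of edges leaving s. -/
theorem stmt7 (E : Set (TEdge V)) (hE : E.Finite) (s z : V) :
    ((fun P => wdur P) '' {P | IsPath E s z P}).ncard ≤
      (TEdge.time '' {e ∈ E | e.src = s}).ncard * {e ∈ E | e.dst = z}.ncard := by
  have hS : (TEdge.time '' {e ∈ E | e.src = s}).Finite :=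
    (hE.subset (Set.sep_subset _ _)).image _
  have hZ : ({e ∈ E | e.dst = z} : Set (TEdge V)).Finite := hE.subset (Set.sep_subset _ _)
  have hsub : ((fun P => wdur P) '' {P | IsPath E s z P}) ⊆
      (fun p : ℕ × TEdge V => p.2.time + p.2.lam - p.1) ''
        ((TEdge.time '' {e ∈ E | e.src = s}) ×ˢ {e ∈ E | e.dst = z}) := by
    rintro d ⟨P, hP, rfl⟩
    obtain ⟨⟨hne, hmem, _, hhead, hlast⟩, _⟩ := hP
    have he₀ : P.head? = some (P.head hne) := List.head?_eq_head hne
    have heL : P.getLast? = some (P.getLast hne) := List.getLast?_eq_getLast hne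
    refine ⟨((P.head hne).time, P.getLast hne), ⟨⟨P.head hne,
      ⟨hmem _ (List.head_mem hne), hhead _ he₀⟩, rfl⟩,
      hmem _ (List.getLast_mem hne), hlast _ heL⟩, ?_⟩
    simp only [wdur, warr, wstart, he₀, heL, Option.elim]
  calc ((fun P => wdur P) '' {P | IsPath E s z P}).ncard
      ≤ ((fun p : ℕ × TEdge V => p.2.time + p.2.lam - p.1) ''
        ((TEdge.time '' {e ∈ E | e.src = s}) ×ˢ {e ∈ E | e.dst = z})).ncard :=
        Set.ncard_le_ncard hsub ((hS.prod hZ).image _)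
    _ ≤ ((TEdge.time '' {e ∈ E | e.src = s}) ×ˢ {e ∈ E | e.dst = z}).ncard :=
        Set.ncard_image_le (hS.prod hZ)
    _ = _ := by
        rw [← Nat.card_coe_set_eq, ← Nat.card_coe_set_eq, ← Nat.card_coe_set_eq,
          Nat.card_congr (Equiv.Set.prod _ _), Nat.card_prod]
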